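/- Let n ≥ 2, let A be a real n×n singular irreducible M-matrix, and let U_G be the FSAI upper triangular factor associated with an admissible pattern S_U. Then the product A U_G is a singular M-matrix. -/

import Mathlib

open Matrix

/-- The spectral radius of a real matrix: the maximum modulus of its complex
eigenvalues (supremum of moduli of elements of the complex spectrum). -/
noncomputable def specRad {n : ℕ} (B : Matrix (Fin n) (Fin n) ℝ) : ℝ :=
  sSup ((fun z : ℂ => ‖z‖) '' spectrum ℂ (B.map Complex.ofReal))

/-- A real square matrix is a Z-matrix if its off-diagonal entries are nonpositive. -/
def IsZMatrix {n : ℕ} (A : Matrix (Fin n) (Fin n) ℝ) : Prop :=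
  ∀ i j, i ≠ j → A i j ≤ 0

/-- A Z-matrix `A` is a nonsingular M-matrix if `A = s • 1 - B` with `B`
entrywise nonnegative and `s > ρ(B)`. -/
def IsNonsingularMMatrix {n : ℕ} (A : Matrix (Fin n) (Fin n) ℝ) : Prop :=
  IsZMatrix A ∧ ∃ (s : ℝ) (B : Matrix (Fin n) (Fin n) ℝ),
    (∀ i j, 0 ≤ B i j) ∧ specRad B < s ∧ A = s • (1 : Matrix (Fin n) (Fin n) ℝ) - B

/-- A Z-matrix `A` is a singular M-matrix if `A = ρ(B) • 1 - B` with `B`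
entrywise nonnegative. -/
def IsSingularMMatrix {n : ℕ} (A : Matrix (Fin n) (Fin n) ℝ) : Prop :=
  IsZMatrix A ∧ ∃ B : Matrix (Fin n) (Fin n) ℝ,
    (∀ i j, 0 ≤ B i j) ∧ A = specRad B • (1 : Matrix (Fin n) (Fin n) ℝ) - B

/-- A matrix is irreducible if its directed graph (edge `i → j` iff `A i j ≠ 0`)
is strongly connected. -/
def IsIrreducibleMatrix {n : ℕ} (A : Matrix (Fin n) (Fin n) ℝ) : Prop :=
  ∀ i j : Fin n, Relation.ReflTransGen (fun a b : Fin n => A a b ≠ 0) i j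

/-- Lower triangular real matrix. -/
def IsLowerTri {n : ℕ} (L : Matrix (Fin n) (Fin n) ℝ) : Prop :=
  ∀ i j : Fin n, i < j → L i j = 0

/-- Upper triangular real matrix. -/
def IsUpperTri {n : ℕ} (U : Matrix (Fin n) (Fin n) ℝ) : Prop :=
  ∀ i j : Fin n, j < i → U i j = 0

/-- `L` is an FSAI lower triangular factor of `A` for the pattern `S`:
`L` is lower triangular, vanishes off the pattern, and `(L * A) i j = δ i j`
on the pattern. -/
def IsFSAILowerFactor {n : ℕ} (A L : Matrix (Fin n) (Fin n) ℝ)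
    (S : Set (Fin n × Fin n)) : Prop :=
  IsLowerTri L ∧ (∀ p : Fin n × Fin n, p ∉ S → L p.1 p.2 = 0) ∧
    ∀ p : Fin n × Fin n, p ∈ S → (L * A) p.1 p.2 = if p.1 = p.2 then 1 else 0

/-- `U` is an FSAI upper triangular factor of `A` for the pattern `S`:
`U` is upper triangular, vanishes off the pattern, and `(A * U) i j = δ i j`
on the pattern. -/
def IsFSAIUpperFactor {n : ℕ} (A U : Matrix (Fin n) (Fin n) ℝ)
    (S : Set (Fin n × Fin n)) : Prop :=
  IsUpperTri U ∧ (∀ p : Fin n × Fin n, p ∉ S → U p.1 p.2 = 0) ∧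
    ∀ p : Fin n × Fin n, p ∈ S → (A * U) p.1 p.2 = if p.1 = p.2 then 1 else 0

open Polynomial

section SpecBasics

variable {m : Type*} [Fintype m] [DecidableEq m]

lemma eval_charpoly' (M : Matrix m m ℂ) (t : ℂ) :
    (M.charpoly).eval t = (t • (1 : Matrix m m ℂ) - M).det := by
  rw [Matrix.charpoly, ← Polynomial.coe_evalRingHom, RingHom.map_det]
  congr 1
  ext i j
  by_cases h : i = j
  · subst h
    simp [Matrix.charmatrix_apply_eq, Matrix.one_apply]
  · simp [Matrix.charmatrix_apply_ne _ _ _ h, Matrix.one_apply, h]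

lemma mem_spec_iff (M : Matrix m m ℂ) (z : ℂ) :
    z ∈ spectrum ℂ M ↔ (z • (1 : Matrix m m ℂ) - M).det = 0 := by
  rw [spectrum.mem_iff, Algebra.algebraMap_eq_smul_one]
  rw [Matrix.isUnit_iff_isUnit_det]
  simp [isUnit_iff_ne_zero]

lemma spec_finite (M : Matrix m m ℂ) : (spectrum ℂ M).Finite := by
  have h : spectrum ℂ M ⊆ {z | (M.charpoly).IsRoot z} := by
    intro z hz
    rw [mem_spec_iff] at hz
    simp only [Set.mem_setOf_eq, Polynomial.IsRoot, eval_charpoly', hz]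
  exact (Polynomial.finite_setOf_isRoot (M.charpoly_monic.ne_zero)).subset h

lemma spec_nonempty [Nonempty m] (M : Matrix m m ℂ) : (spectrum ℂ M).Nonempty := by
  obtain ⟨z, hz⟩ := IsAlgClosed.exists_root M.charpoly (by
    rw [Polynomial.degree_eq_natDegree M.charpoly_monic.ne_zero]
    simp [Matrix.charpoly_natDegree_eq_dim, Fintype.card_ne_zero])
  exact ⟨z, (mem_spec_iff M z).2 (by rw [← eval_charpoly']; exact hz)⟩

end SpecBasics

section SRad

variable {m : Type*} [Fintype m] [DecidableEq m]

/-- general-index version of `specRad`. -/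
noncomputable def sRad (B : Matrix m m ℝ) : ℝ :=
  sSup ((fun z : ℂ => ‖z‖) '' spectrum ℂ (B.map Complex.ofReal))

lemma sRad_abs_image_finite (B : Matrix m m ℝ) :
    ((fun z : ℂ => ‖z‖) '' spectrum ℂ (B.map Complex.ofReal)).Finite :=
  (spec_finite _).image _

lemma exists_abs_eq_sRad [Nonempty m] (B : Matrix m m ℝ) :
    ∃ z ∈ spectrum ℂ (B.map Complex.ofReal), ‖z‖ = sRad B := by
  have hne : ((fun z : ℂ => ‖z‖) '' spectrum ℂ (B.map Complex.ofReal)).Nonempty :=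
    (spec_nonempty _).image _
  have := hne.csSup_mem (sRad_abs_image_finite B)
  obtain ⟨z, hz, hz'⟩ := this
  exact ⟨z, hz, hz'⟩

lemma abs_le_sRad (B : Matrix m m ℝ) {z : ℂ}
    (hz : z ∈ spectrum ℂ (B.map Complex.ofReal)) : ‖z‖ ≤ sRad B :=
  le_csSup (sRad_abs_image_finite B).bddAbove ⟨z, hz, rfl⟩

lemma sRad_nonneg [Nonempty m] (B : Matrix m m ℝ) : 0 ≤ sRad B := by
  obtain ⟨z, _, hz⟩ := exists_abs_eq_sRad B
  rw [← hz]; positivity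

/-- real det version of spectrum membership -/
lemma real_det_zero_mem_spec (B : Matrix m m ℝ) (t : ℝ)
    (h : (t • (1 : Matrix m m ℝ) - B).det = 0) :
    (t : ℂ) ∈ spectrum ℂ (B.map Complex.ofReal) := by
  rw [mem_spec_iff]
  have : ((t : ℂ) • (1 : Matrix m m ℂ) - B.map Complex.ofReal)
      = (t • (1 : Matrix m m ℝ) - B).map Complex.ofReal := by
    ext i j
    simp [Matrix.one_apply, apply_ite]
  rw [this]
  have hd := RingHom.map_det Complex.ofRealHom (t • (1 : Matrix m m ℝ) - B)
  rw [RingHom.mapMatrix_apply] at hd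
  have he : (t • (1 : Matrix m m ℝ) - B).map Complex.ofReal
      = (t • (1 : Matrix m m ℝ) - B).map Complex.ofRealHom := rfl
  rw [he, ← hd, h]
  simp

lemma det_ne_zero_of_sRad_lt [Nonempty m] (B : Matrix m m ℝ) {t : ℝ} (ht : sRad B < t) :
    (t • (1 : Matrix m m ℝ) - B).det ≠ 0 := by
  intro h
  have := abs_le_sRad B (real_det_zero_mem_spec B t h)
  rw [Complex.norm_real, Real.norm_eq_abs] at this
  have h0 : (0:ℝ) ≤ t := le_trans (sRad_nonneg B) ht.le
  rw [abs_of_nonneg h0] at this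
  linarith

end SRad

section Neumann

variable {m : Type*} [Fintype m] [DecidableEq m]

lemma pow_entry_nonneg (X : Matrix m m ℝ) (hX : ∀ i j, 0 ≤ X i j) :
    ∀ N, ∀ i j, 0 ≤ (X ^ N) i j := by
  intro N
  induction N with
  | zero => intro i j; simp [Matrix.one_apply]; positivity
  | succ N ih =>
    intro i j
    rw [pow_succ, Matrix.mul_apply]
    exact Finset.sum_nonneg fun l _ => mul_nonneg (ih i l) (hX l j)

lemma pow_rowsum_le (X : Matrix m m ℝ) (hX : ∀ i j, 0 ≤ X i j) (q : ℝ) (hq0 : 0 ≤ q)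
    (hrow : ∀ i, ∑ j, X i j ≤ q) : ∀ N i, ∑ j, (X ^ N) i j ≤ q ^ N := by
  intro N
  induction N with
  | zero => intro i; simp [Matrix.one_apply]
    -- sum of row of identity is 1
  | succ N ih =>
    intro i
    rw [pow_succ]
    calc ∑ j, (X ^ N * X) i j = ∑ l, (X ^ N) i l * (∑ j, X l j) := by
          simp only [Matrix.mul_apply, Finset.mul_sum]
          rw [Finset.sum_comm]
      _ ≤ ∑ l, (X ^ N) i l * q :=
          Finset.sum_le_sum fun l _ =>
            mul_le_mul_of_nonneg_left (hrow l) (pow_entry_nonneg X hX N i l)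
      _ = (∑ l, (X ^ N) i l) * q := by rw [Finset.sum_mul]
      _ ≤ q ^ N * q := mul_le_mul_of_nonneg_right (ih i) hq0
      _ = q ^ (N + 1) := (pow_succ q N).symm

lemma pow_entry_le (X : Matrix m m ℝ) (hX : ∀ i j, 0 ≤ X i j) (q : ℝ) (hq0 : 0 ≤ q)
    (hrow : ∀ i, ∑ j, X i j ≤ q) (N : ℕ) (i j : m) : (X ^ N) i j ≤ q ^ N := by
  calc (X ^ N) i j ≤ ∑ l, (X ^ N) i l :=
        Finset.single_le_sum (fun l _ => pow_entry_nonneg X hX N i l) (Finset.mem_univ j)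
    _ ≤ q ^ N := pow_rowsum_le X hX q hq0 hrow N i

lemma neumann_inv_nonneg (X : Matrix m m ℝ) (hX : ∀ i j, 0 ≤ X i j) (q : ℝ) (hq0 : 0 ≤ q)
    (hq : q < 1) (hrow : ∀ i, ∑ j, X i j ≤ q) (hdet : IsUnit (1 - X).det) :
    ∀ i j, 0 ≤ (1 - X)⁻¹ i j := by
  intro i j
  set Y := (1 - X)⁻¹ with hYdef
  have hY : (1 - X) * Y = 1 := Matrix.mul_nonsing_inv _ hdet
  have key : ∀ N : ℕ, Y = (∑ k ∈ Finset.range N, X ^ k) + X ^ N * Y := by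
    intro N
    have hg : (∑ k ∈ Finset.range N, X ^ k) * (X - 1) = X ^ N - 1 := geom_sum_mul X N
    have hg' : (∑ k ∈ Finset.range N, X ^ k) * (1 - X) = 1 - X ^ N := by
      have := congrArg Neg.neg hg
      simpa [mul_sub, sub_eq_iff_eq_add, neg_sub] using this
    have h2 : (∑ k ∈ Finset.range N, X ^ k) * ((1 - X) * Y) = (1 - X ^ N) * Y := by
      rw [← mul_assoc, hg']
    rw [hY, mul_one] at h2
    rw [h2]
    noncomm_ring
  set K : ℝ := ∑ l, |Y l j| with hK
  have hKnn : 0 ≤ K := Finset.sum_nonneg fun l _ => abs_nonneg _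
  by_contra hneg
  push_neg at hneg
  have hε : 0 < -Y i j := by linarith
  have htend : Filter.Tendsto (fun N : ℕ => q ^ N * K) Filter.atTop (nhds 0) := by
    simpa using (tendsto_pow_atTop_nhds_zero_of_lt_one hq0 hq).mul_const K
  obtain ⟨N, hN⟩ := (htend.eventually (gt_mem_nhds hε)).exists
  have h1 : |(X ^ N * Y) i j| ≤ q ^ N * K := by
    rw [Matrix.mul_apply]
    calc |∑ l, (X ^ N) i l * Y l j| ≤ ∑ l, |(X ^ N) i l * Y l j| :=
          Finset.abs_sum_le_sum_abs _ _
      _ ≤ ∑ l, q ^ N * |Y l j| := by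
          apply Finset.sum_le_sum
          intro l _
          rw [abs_mul, abs_of_nonneg (pow_entry_nonneg X hX N i l)]
          exact mul_le_mul_of_nonneg_right (pow_entry_le X hX q hq0 hrow N i l) (abs_nonneg _)
      _ = q ^ N * K := by rw [← Finset.mul_sum]
  have h2 : 0 ≤ (∑ k ∈ Finset.range N, X ^ k) i j := by
    rw [Matrix.sum_apply]
    exact Finset.sum_nonneg fun k _ => pow_entry_nonneg X hX k i j
  have h3 := key N
  have h4 : Y i j = (∑ k ∈ Finset.range N, X ^ k) i j + (X ^ N * Y) i j := by
    conv_lhs => rw [h3]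
    simp [Matrix.add_apply]
  have := neg_abs_le ((X ^ N * Y) i j)
  have : Y i j ≥ -(q ^ N * K) := by
    rw [h4]
    have := neg_le_of_abs_le h1
    linarith
  linarith

end Neumann

section Resolvent

variable {m : Type*} [Fintype m] [DecidableEq m]

lemma resolvent_nonneg [Nonempty m] (B : Matrix m m ℝ) (hB : ∀ i j, 0 ≤ B i j) (t : ℝ)
    (hdet : ∀ s, t ≤ s → (s • (1 : Matrix m m ℝ) - B).det ≠ 0) :
    ∀ i j, 0 ≤ ((t • (1 : Matrix m m ℝ) - B)⁻¹) i j := by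
  classical
  set R : ℝ → Matrix m m ℝ := fun s => (s • (1 : Matrix m m ℝ) - B)⁻¹ with hR
  set β : ℝ := 1 + ∑ i, ∑ j, B i j with hβ
  have hrowβ : ∀ i, ∑ j, B i j ≤ β - 1 := by
    intro i
    have : ∑ j, B i j ≤ ∑ i, ∑ j, B i j :=
      Finset.single_le_sum
        (fun i _ => Finset.sum_nonneg fun j _ => hB i j) (Finset.mem_univ i)
    simp [hβ]; linarith
  have hβ1 : (1:ℝ) ≤ β := by
    have : (0:ℝ) ≤ ∑ i, ∑ j, B i j :=
      Finset.sum_nonneg fun i _ => Finset.sum_nonneg fun j _ => hB i j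
    simp [hβ]; linarith
  set b : ℝ := max t β with hb
  -- Step 1: good for large s
  have Hbig : ∀ s, b ≤ s → ∀ i j, 0 ≤ R s i j := by
    intro s hs i j
    have hsβ : β ≤ s := le_trans (le_max_right t β) hs
    have hs1 : (1:ℝ) ≤ s := le_trans hβ1 hsβ
    have hs0 : (0:ℝ) < s := lt_of_lt_of_le one_pos hs1
    set X : Matrix m m ℝ := s⁻¹ • B with hX
    have hXnn : ∀ i j, 0 ≤ X i j := fun i j => by
      simp only [hX, Matrix.smul_apply, smul_eq_mul]
      exact mul_nonneg (inv_nonneg.2 hs0.le) (hB i j)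
    set q : ℝ := 1 - 1/s with hq
    have hq0 : 0 ≤ q := by
      have h1 : 1/s ≤ 1 := by
        rw [div_le_one hs0]; exact hs1
      simp only [hq]; linarith
    have hq1 : q < 1 := by
      have h1 : 0 < 1/s := by positivity
      simp only [hq]; linarith
    have hrowX : ∀ i, ∑ j, X i j ≤ q := by
      intro i
      have h1 : ∑ j, X i j = s⁻¹ * ∑ j, B i j := by
        simp [hX, Matrix.smul_apply, Finset.mul_sum]
      rw [h1, hq]
      have h2 : s⁻¹ * ∑ j, B i j ≤ s⁻¹ * (s - 1) := by
        apply mul_le_mul_of_nonneg_left _ (by positivity)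
        exact le_trans (hrowβ i) (by linarith)
      calc s⁻¹ * ∑ j, B i j ≤ s⁻¹ * (s - 1) := h2
        _ = 1 - 1/s := by field_simp
  -- factor s • 1 - B = s • (1 - X)
    have hfact : s • (1 : Matrix m m ℝ) - B = s • ((1 : Matrix m m ℝ) - X) := by
      rw [smul_sub, hX, smul_smul, mul_inv_cancel₀ (ne_of_gt hs0), one_smul]
    have hdet1X : IsUnit ((1 : Matrix m m ℝ) - X).det := by
      rw [isUnit_iff_ne_zero]
      intro h0
      apply hdet s (le_trans (le_max_left t β) hs)
      rw [hfact, Matrix.det_smul, h0, mul_zero]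
    have hY := neumann_inv_nonneg X hXnn q hq0 hq1 hrowX hdet1X
    have hRs : R s = s⁻¹ • ((1 : Matrix m m ℝ) - X)⁻¹ := by
      rw [hR]
      apply Matrix.inv_eq_right_inv
      rw [hfact, Matrix.smul_mul, Matrix.mul_smul, smul_smul,
        mul_inv_cancel₀ (ne_of_gt hs0), one_smul]
      exact Matrix.mul_nonsing_inv _ hdet1X
    rw [hRs]
    simp only [Matrix.smul_apply, smul_eq_mul]
    exact mul_nonneg (by positivity) (hY i j)
  -- Step 2: one-step downward propagation
  have Hstep : ∀ s₀ s₁ K, t ≤ s₁ → s₁ ≤ s₀ → (∀ i j, 0 ≤ R s₀ i j) →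
      (∀ i, ∑ j, R s₀ i j ≤ K) → (s₀ - s₁) * K < 1 → ∀ i j, 0 ≤ R s₁ i j := by
    intro s₀ s₁ K hts₁ hs₁s₀ hgood hKrow hcK i j
    set c : ℝ := s₀ - s₁ with hc
    have hc0 : 0 ≤ c := by simp [hc]; linarith
    have hdet₀ : IsUnit ((s₀ • (1 : Matrix m m ℝ) - B)).det :=
      isUnit_iff_ne_zero.2 (hdet s₀ (le_trans hts₁ hs₁s₀))
    set X : Matrix m m ℝ := c • R s₀ with hX
    have hXnn : ∀ i j, 0 ≤ X i j := fun i j =>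
      mul_nonneg hc0 (hgood i j)
    have hK0 : 0 ≤ K := le_trans (Finset.sum_nonneg fun j _ =>
      hgood (Classical.arbitrary m) j) (hKrow (Classical.arbitrary m))
    set q : ℝ := c * K with hq
    have hq0 : 0 ≤ q := mul_nonneg hc0 hK0
    have hq1 : q < 1 := hcK
    have hrowX : ∀ i, ∑ j, X i j ≤ q := by
      intro i
      have : ∑ j, X i j = c * ∑ j, R s₀ i j := by
        simp [hX, Matrix.smul_apply, Finset.mul_sum]
      rw [this, hq]
      exact mul_le_mul_of_nonneg_left (hKrow i) hc0
    have hfact : s₁ • (1 : Matrix m m ℝ) - B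
        = (s₀ • (1 : Matrix m m ℝ) - B) * ((1 : Matrix m m ℝ) - X) := by
      rw [mul_sub, mul_one, hX, Matrix.mul_smul, Matrix.mul_nonsing_inv _ hdet₀]
      have hc1 : c • (1 : Matrix m m ℝ) = s₀ • (1 : Matrix m m ℝ) - s₁ • (1 : Matrix m m ℝ) := by
        rw [hc, sub_smul]
      rw [hc1]
      abel
    have hdet1X : IsUnit ((1 : Matrix m m ℝ) - X).det := by
      rw [isUnit_iff_ne_zero]
      intro h0
      apply hdet s₁ hts₁
      rw [hfact, Matrix.det_mul, h0, mul_zero]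
    have hY := neumann_inv_nonneg X hXnn q hq0 hq1 hrowX hdet1X
    have hRs₁ : R s₁ = ((1 : Matrix m m ℝ) - X)⁻¹ * R s₀ := by
      rw [hR]
      simp only
      rw [hfact, Matrix.mul_inv_rev]
    rw [hRs₁, Matrix.mul_apply]
    exact Finset.sum_nonneg fun l _ => mul_nonneg (hY i l) (hgood l j)
  -- Step 3: continuity and uniform bound on Icc t (b+1)
  have hcont : ∀ i j, ContinuousOn (fun s => R s i j) (Set.Icc t (b + 1)) := by
    intro i j
    have hM : Continuous fun s : ℝ => s • (1 : Matrix m m ℝ) - B :=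
      (continuous_id.smul continuous_const).sub continuous_const
    have hdetc : Continuous fun s : ℝ => (s • (1 : Matrix m m ℝ) - B).det :=
      hM.matrix_det
    have hadjc : Continuous fun s : ℝ => (s • (1 : Matrix m m ℝ) - B).adjugate i j :=
      (continuous_apply j).comp ((continuous_apply i).comp hM.matrix_adjugate)
    have hEq : ∀ s : ℝ, R s i j
        = ((s • (1 : Matrix m m ℝ) - B).det)⁻¹ * (s • (1 : Matrix m m ℝ) - B).adjugate i j := by
      intro s
      rw [hR]
      simp [Matrix.inv_def, Ring.inverse_eq_inv', Matrix.smul_apply]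
    simp only [hEq]
    exact ((hdetc.continuousOn.inv₀ fun s hs => hdet s hs.1).mul hadjc.continuousOn)
  have hbound : ∃ K, 0 ≤ K ∧ ∀ s ∈ Set.Icc t (b + 1), ∀ i, ∑ j, R s i j ≤ K := by
    have hcomp : IsCompact (Set.Icc t (b + 1)) := isCompact_Icc
    have h1 : ∀ p : m × m, ∃ Kp : ℝ, ∀ s ∈ Set.Icc t (b + 1), |R s p.1 p.2| ≤ Kp := by
      intro p
      obtain ⟨Kp, hKp⟩ := hcomp.exists_bound_of_continuousOn (hcont p.1 p.2)
      exact ⟨Kp, fun s hs => by simpa using hKp s hs⟩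
    choose Kf hKf using h1
    refine ⟨∑ p : m × m, max 0 (Kf p), Finset.sum_nonneg fun p _ => le_max_left _ _, ?_⟩
    intro s hs i
    calc ∑ j, R s i j ≤ ∑ j, |R s i j| := Finset.sum_le_sum fun j _ => le_abs_self _
      _ ≤ ∑ j, max 0 (Kf (i, j)) := Finset.sum_le_sum fun j _ =>
          le_trans (hKf (i, j) s hs) (le_max_right _ _)
      _ ≤ ∑ p : m × m, max 0 (Kf p) := by
          rw [Fintype.sum_prod_type]
          exact Finset.single_le_sum
            (f := fun i' => ∑ j, max 0 (Kf (i', j)))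
            (fun i' _ => Finset.sum_nonneg fun j _ => le_max_left _ _) (Finset.mem_univ i)
  -- Step 4: covering argument
  show ∀ i j, 0 ≤ R t i j
  by_contra hbadt
  obtain ⟨K, hK0, hKrow⟩ := hbound
  set bad : Set ℝ := {s : ℝ | t ≤ s ∧ ¬ ∀ i j, 0 ≤ R s i j} with hbad
  have htbad : t ∈ bad := ⟨le_refl t, hbadt⟩
  have hbub : ∀ s ∈ bad, s ≤ b := by
    intro s hs
    by_contra hgt
    exact hs.2 (Hbig s (le_of_not_ge hgt))
  have hne : bad.Nonempty := ⟨t, htbad⟩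
  have hbdd : BddAbove bad := ⟨b, hbub⟩
  set sstar : ℝ := sSup bad with hsstar
  have hts : t ≤ sstar := le_csSup hbdd htbad
  have hsb : sstar ≤ b := csSup_le hne hbub
  set c : ℝ := min (1/2) (1/(2*(K+1))) with hcdef
  have hc0 : 0 < c := lt_min (by norm_num) (by positivity)
  have hchalf : c ≤ 1/2 := min_le_left _ _
  have hcK : c * K < 1 := by
    have h1 : c * K ≤ (1/(2*(K+1))) * K :=
      mul_le_mul_of_nonneg_right (min_le_right _ _) hK0
    have h2 : (1/(2*(K+1))) * K < 1 := by
      rw [div_mul_eq_mul_div, div_lt_one (by positivity)]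
      nlinarith
    linarith
  obtain ⟨s₁, hs₁bad, hs₁gt⟩ := exists_lt_of_lt_csSup hne
    (show sstar - c/2 < sstar by linarith)
  set s₀ : ℝ := s₁ + c with hs₀def
  have hs₁le : s₁ ≤ sstar := le_csSup hbdd hs₁bad
  have hs₀gt : sstar < s₀ := by simp only [hs₀def]; linarith
  have hs₀good : ∀ i j, 0 ≤ R s₀ i j := by
    by_contra hng
    have hmem : s₀ ∈ bad := ⟨le_trans hts hs₀gt.le, hng⟩
    have := le_csSup hbdd hmem
    linarith
  have hs₀mem : s₀ ∈ Set.Icc t (b+1) := by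
    constructor
    · exact le_trans hts hs₀gt.le
    · simp only [hs₀def]; linarith
  have hgood₁ := Hstep s₀ s₁ K hs₁bad.1 (by simp only [hs₀def]; linarith)
    hs₀good (hKrow s₀ hs₀mem) (by
      have : s₀ - s₁ = c := by simp only [hs₀def]; ring
      rw [this]; exact hcK)
  exact hs₁bad.2 hgood₁

end Resolvent

section PF

variable {m : Type*} [Fintype m] [DecidableEq m]

lemma eq_zero_of_inv_nonneg_mulVec_nonpos (M : Matrix m m ℝ) (hdet : IsUnit M.det)
    (hR : ∀ i j, 0 ≤ M⁻¹ i j) (w : m → ℝ) (hw : ∀ i, 0 ≤ w i)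
    (hu : ∀ i, (M *ᵥ w) i ≤ 0) : w = 0 := by
  have hw' : w = M⁻¹ *ᵥ (M *ᵥ w) := by
    rw [Matrix.mulVec_mulVec, Matrix.nonsing_inv_mul _ hdet, Matrix.one_mulVec]
  funext i
  have hle : (M⁻¹ *ᵥ (M *ᵥ w)) i ≤ 0 := by
    rw [Matrix.mulVec, dotProduct]
    exact Finset.sum_nonpos fun k _ =>
      mul_nonpos_of_nonneg_of_nonpos (hR i k) (hu k)
  have h0 : w i ≤ 0 := by
    conv_lhs => rw [hw']
    exact hle
  simpa using le_antisymm h0 (hw i)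

/-- modulus inequality for a complex eigen-relation of a real nonnegative matrix -/
lemma abs_eigen_subinv (B : Matrix m m ℝ) (hB : ∀ i j, 0 ≤ B i j) {lam : ℂ} {v : m → ℂ}
    (hv : (B.map Complex.ofReal) *ᵥ v = lam • v) (i : m) :
    ‖lam‖ * ‖v i‖ ≤ (B *ᵥ fun k => ‖v k‖) i := by
  have h1 : ‖lam‖ * ‖v i‖ = ‖(lam • v) i‖ := by
    simp
  rw [h1, ← hv]
  rw [Matrix.mulVec, dotProduct]
  calc ‖∑ j, (B.map Complex.ofReal) i j * v j‖
      ≤ ∑ j, ‖(B.map Complex.ofReal) i j * v j‖ :=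
        norm_sum_le _ _
    _ = (B *ᵥ fun k => ‖v k‖) i := by
        rw [Matrix.mulVec, dotProduct]
        apply Finset.sum_congr rfl
        intro j _
        rw [norm_mul, Matrix.map_apply, Complex.norm_real, Real.norm_eq_abs, abs_of_nonneg (hB i j)]

lemma spec_to_eigenvector (M : Matrix m m ℂ) {z : ℂ} (hz : z ∈ spectrum ℂ M) :
    ∃ v : m → ℂ, v ≠ 0 ∧ M *ᵥ v = z • v := by
  rw [mem_spec_iff] at hz
  obtain ⟨v, hv0, hv⟩ := (Matrix.exists_mulVec_eq_zero_iff).2 hz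
  refine ⟨v, hv0, ?_⟩
  rw [Matrix.sub_mulVec, Matrix.smul_mulVec, Matrix.one_mulVec, sub_eq_zero] at hv
  exact hv.symm

lemma pf_det_zero [Nonempty m] (B : Matrix m m ℝ) (hB : ∀ i j, 0 ≤ B i j) :
    (sRad B • (1 : Matrix m m ℝ) - B).det = 0 := by
  by_contra hC
  set r : ℝ := sRad B with hr
  have hdetall : ∀ s, r ≤ s → (s • (1 : Matrix m m ℝ) - B).det ≠ 0 := by
    intro s hs
    rcases eq_or_lt_of_le hs with h | h
    · rw [← h]; exact hC
    · exact det_ne_zero_of_sRad_lt B h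
  have hRnn := resolvent_nonneg B hB r hdetall
  obtain ⟨lam, hlam, hlabs⟩ := exists_abs_eq_sRad B
  obtain ⟨v, hv0, hv⟩ := spec_to_eigenvector _ hlam
  set w : m → ℝ := fun k => ‖v k‖ with hw
  have hwnn : ∀ i, 0 ≤ w i := fun i => norm_nonneg _
  have hsub : ∀ i, r * w i ≤ (B *ᵥ w) i := by
    intro i
    rw [hr, ← hlabs]
    exact abs_eigen_subinv B hB hv i
  have hu : ∀ i, ((r • (1 : Matrix m m ℝ) - B) *ᵥ w) i ≤ 0 := by
    intro i
    rw [Matrix.sub_mulVec, Matrix.smul_mulVec, Matrix.one_mulVec]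
    have := hsub i
    simp only [Pi.sub_apply, Pi.smul_apply, smul_eq_mul]
    linarith
  have hzero := eq_zero_of_inv_nonneg_mulVec_nonpos _ (isUnit_iff_ne_zero.2 hC) hRnn w hwnn hu
  apply hv0
  funext i
  have : w i = 0 := by rw [hzero]; rfl
  simpa [hw, _root_.map_eq_zero] using this

lemma subinvariant_le [Nonempty m] (B : Matrix m m ℝ) (hB : ∀ i j, 0 ≤ B i j) (ρ : ℝ)
    (w : m → ℝ) (hw : ∀ i, 0 ≤ w i) (hw0 : w ≠ 0)
    (hsub : ∀ i, ρ * w i ≤ (B *ᵥ w) i) : ρ ≤ sRad B := by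
  by_contra hlt
  push_neg at hlt
  set t : ℝ := (sRad B + ρ) / 2 with ht
  have ht1 : sRad B < t := by simp only [ht]; linarith
  have ht2 : t < ρ := by simp only [ht]; linarith
  have hdetall : ∀ s, t ≤ s → (s • (1 : Matrix m m ℝ) - B).det ≠ 0 := fun s hs =>
    det_ne_zero_of_sRad_lt B (lt_of_lt_of_le ht1 hs)
  have hRnn := resolvent_nonneg B hB t hdetall
  have hu : ∀ i, ((t • (1 : Matrix m m ℝ) - B) *ᵥ w) i ≤ 0 := by
    intro i
    rw [Matrix.sub_mulVec, Matrix.smul_mulVec, Matrix.one_mulVec]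
    have h1 := hsub i
    have h2 : t * w i ≤ ρ * w i := mul_le_mul_of_nonneg_right ht2.le (hw i)
    simp only [Pi.sub_apply, Pi.smul_apply, smul_eq_mul]
    linarith
  exact hw0 (eq_zero_of_inv_nonneg_mulVec_nonpos _
    (isUnit_iff_ne_zero.2 (hdetall t le_rfl)) hRnn w hw hu)

end PF
section Irred

variable {m : Type*} [Fintype m] [DecidableEq m]

/-- strong connectivity of the graph of nonzero entries -/
def Conn (B : Matrix m m ℝ) : Prop :=
  ∀ i j : m, Relation.ReflTransGen (fun a b : m => B a b ≠ 0) i j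

lemma exists_pos_power (B : Matrix m m ℝ) (hB : ∀ i j, 0 ≤ B i j) (hconn : Conn B) :
    ∃ C : Matrix m m ℝ, (∀ i j, 0 < C i j) ∧ C * B = B * C := by
  classical
  set P : Matrix m m ℝ := 1 + B with hP
  have hPnn : ∀ i j, 0 ≤ P i j := by
    intro i j
    have := hB i j
    simp only [hP, Matrix.add_apply, Matrix.one_apply]
    split_ifs <;> linarith
  have hpow : ∀ k i j, 0 ≤ (P ^ k) i j := fun k i j => pow_entry_nonneg P hPnn k i j
  have hdiag : ∀ j, 1 ≤ P j j := by
    intro j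
    simp only [hP, Matrix.add_apply, Matrix.one_apply_eq]
    linarith [hB j j]
  have hmono : ∀ k i j, (P ^ k) i j ≤ (P ^ (k+1)) i j := by
    intro k i j
    rw [pow_succ, Matrix.mul_apply]
    calc (P ^ k) i j = (P ^ k) i j * 1 := by ring
      _ ≤ (P ^ k) i j * P j j := mul_le_mul_of_nonneg_left (hdiag j) (hpow k i j)
      _ ≤ ∑ l, (P ^ k) i l * P l j :=
          Finset.single_le_sum (fun l _ => mul_nonneg (hpow k i l) (hPnn l j))
            (Finset.mem_univ j)
  have hmono' : ∀ i j k K, k ≤ K → (P ^ k) i j ≤ (P ^ K) i j := by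
    intro i j k K hkK
    induction K, hkK using Nat.le_induction with
    | base => exact le_refl _
    | succ K hK ih => exact le_trans ih (hmono K i j)
  have hpath : ∀ i j : m, ∃ k, 0 < (P ^ k) i j := by
    intro i j
    induction hconn i j with
    | refl => exact ⟨0, by simp⟩
    | tail _ e ih =>
      rename_i b c _
      obtain ⟨k, hk⟩ := ih
      refine ⟨k + 1, ?_⟩
      rw [pow_succ, Matrix.mul_apply]
      have hPbc : 0 < P b c := by
        have hbc' : 0 < B b c := lt_of_le_of_ne (hB b c) (Ne.symm e)
        simp only [hP, Matrix.add_apply, Matrix.one_apply]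
        split_ifs <;> linarith
      have hterm : 0 < (P ^ k) i b * P b c := mul_pos hk hPbc
      have hsum : (P ^ k) i b * P b c ≤ ∑ l, (P ^ k) i l * P l c :=
        Finset.single_le_sum (fun l _ => mul_nonneg (hpow k i l) (hPnn l c))
          (Finset.mem_univ b)
      linarith
  choose f hf using fun p : m × m => hpath p.1 p.2
  set K : ℕ := Finset.univ.sup f with hK
  refine ⟨P ^ K, fun i j => ?_, ?_⟩
  · exact lt_of_lt_of_le (hf (i, j)) (hmono' i j _ K (Finset.le_sup (Finset.mem_univ (i, j))))
  · exact (((Commute.one_left B).add_left (Commute.refl B)).pow_left K).eq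

lemma mulVec_pos (C : Matrix m m ℝ) (hC : ∀ i j, 0 < C i j) (z : m → ℝ)
    (hz : ∀ i, 0 ≤ z i) (hz0 : z ≠ 0) (i : m) : 0 < (C *ᵥ z) i := by
  obtain ⟨k₀, hk₀⟩ := Function.ne_iff.1 hz0
  have hk₀' : 0 < z k₀ := lt_of_le_of_ne (hz k₀) (Ne.symm hk₀)
  rw [Matrix.mulVec, dotProduct]
  have h1 : C i k₀ * z k₀ ≤ ∑ l, C i l * z l :=
    Finset.single_le_sum (fun l _ => mul_nonneg (hC i l).le (hz l)) (Finset.mem_univ k₀)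
  have h2 : 0 < C i k₀ * z k₀ := mul_pos (hC i k₀) hk₀'
  linarith

lemma forcing_eq [Nonempty m] (B : Matrix m m ℝ) (hB : ∀ i j, 0 ≤ B i j) (hconn : Conn B)
    (w : m → ℝ) (hw : ∀ i, 0 ≤ w i) (hw0 : w ≠ 0)
    (hsub : ∀ i, sRad B * w i ≤ (B *ᵥ w) i) : B *ᵥ w = sRad B • w := by
  classical
  by_contra hne
  set r : ℝ := sRad B with hr
  set z : m → ℝ := B *ᵥ w - r • w with hz
  have hznn : ∀ i, 0 ≤ z i := by
    intro i
    simp only [hz, Pi.sub_apply, Pi.smul_apply, smul_eq_mul]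
    linarith [hsub i]
  have hz0 : z ≠ 0 := by
    intro h
    exact hne (by rw [← sub_eq_zero]; exact h)
  obtain ⟨C, hCpos, hCcomm⟩ := exists_pos_power B hB hconn
  set x : m → ℝ := C *ᵥ w with hx
  have hxpos : ∀ i, 0 < x i := mulVec_pos C hCpos w hw hw0
  have hCzpos : ∀ i, 0 < (C *ᵥ z) i := mulVec_pos C hCpos z hznn hz0
  have hBx : B *ᵥ x = r • x + C *ᵥ z := by
    rw [hx, Matrix.mulVec_mulVec, ← hCcomm, ← Matrix.mulVec_mulVec]
    have : B *ᵥ w = r • w + z := by rw [hz]; abel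
    rw [this, Matrix.mulVec_add, Matrix.mulVec_smul]
  obtain ⟨i₀, -, hi₀⟩ := Finset.exists_min_image Finset.univ
    (fun i => (C *ᵥ z) i / x i) ⟨Classical.arbitrary m, Finset.mem_univ _⟩
  set δ : ℝ := (C *ᵥ z) i₀ / x i₀ with hδ
  have hδpos : 0 < δ := div_pos (hCzpos i₀) (hxpos i₀)
  have hsub' : ∀ i, (r + δ) * x i ≤ (B *ᵥ x) i := by
    intro i
    have h1 : δ ≤ (C *ᵥ z) i / x i := hi₀ i (Finset.mem_univ i)
    have h2 : δ * x i ≤ (C *ᵥ z) i := by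
      rw [← le_div_iff₀ (hxpos i)]
      exact h1
    have h3 : (B *ᵥ x) i = r * x i + (C *ᵥ z) i := by
      rw [hBx]; simp
    rw [h3]; ring_nf; ring_nf at h2 ⊢; nlinarith
  have := subinvariant_le B hB (r + δ) x (fun i => (hxpos i).le)
    (fun h => by simpa [h] using (hxpos (Classical.arbitrary m)).ne') hsub'
  rw [← hr] at this
  linarith

lemma zero_propagation (B : Matrix m m ℝ) (hB : ∀ i j, 0 ≤ B i j) (hconn : Conn B)
    (w : m → ℝ) (hw : ∀ i, 0 ≤ w i) (r : ℝ) (heig : B *ᵥ w = r • w)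
    (i₀ : m) (h0 : w i₀ = 0) : ∀ j, w j = 0 := by
  intro j
  induction hconn i₀ j with
  | refl => exact h0
  | tail _ e ih =>
    rename_i b c _
    have hb : (B *ᵥ w) b = 0 := by
      rw [heig]; simp [ih]
    rw [Matrix.mulVec, dotProduct] at hb
    have := (Finset.sum_eq_zero_iff_of_nonneg
      (fun l _ => mul_nonneg (hB b l) (hw l))).1 hb c (Finset.mem_univ c)
    rcases mul_eq_zero.1 this with h | h
    · exact absurd h e
    · exact h

end Irred
section Helpers

variable {m : Type*} [Fintype m] [DecidableEq m]

lemma rtg_mono_offdiag {α : Type*} {r r' : α → α → Prop}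
    (h : ∀ a b, r a b → a ≠ b → r' a b) {i j : α}
    (hij : Relation.ReflTransGen r i j) : Relation.ReflTransGen r' i j := by
  induction hij with
  | refl => exact Relation.ReflTransGen.refl
  | tail p e ih =>
    rename_i b c
    by_cases hbc : b = c
    · exact hbc ▸ ih
    · exact Relation.ReflTransGen.tail ih (h b c e hbc)

lemma rtg_reverse {α : Type*} {r r' : α → α → Prop}
    (h : ∀ a b, r a b → a ≠ b → r' b a) {i j : α}
    (hij : Relation.ReflTransGen r i j) : Relation.ReflTransGen r' j i := by
  induction hij with
  | refl => exact Relation.ReflTransGen.refl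
  | tail p e ih =>
    rename_i b c
    by_cases hbc : b = c
    · exact hbc ▸ ih
    · exact Relation.ReflTransGen.head (h b c e hbc) ih

lemma sRad_transpose (B : Matrix m m ℝ) : sRad Bᵀ = sRad B := by
  have hspec : spectrum ℂ (Bᵀ.map Complex.ofReal) = spectrum ℂ (B.map Complex.ofReal) := by
    ext z
    rw [mem_spec_iff, mem_spec_iff]
    have h1 : z • (1 : Matrix m m ℂ) - Bᵀ.map Complex.ofReal
        = (z • (1 : Matrix m m ℂ) - B.map Complex.ofReal)ᵀ := by
      rw [Matrix.transpose_sub, Matrix.transpose_smul, Matrix.transpose_one,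
        Matrix.transpose_map]
    rw [h1, Matrix.det_transpose]
  unfold sRad
  rw [hspec]

lemma sum_eq_sum_subtype' (p : m → Prop) [DecidablePred p] (f : m → ℝ)
    (hf : ∀ x, ¬ p x → f x = 0) : ∑ x, f x = ∑ a : Subtype p, f a.1 := by
  have h1 : ∑ x ∈ Finset.univ.filter p, f x = ∑ x, f x :=
    Finset.sum_filter_of_ne (fun x _ hne => by_contra fun hp => hne (hf x hp))
  rw [← h1]
  exact Finset.sum_subtype _ (by simp) f

end Helpers

theorem fsai_AU_singular_M (n : ℕ) (hn : 2 ≤ n)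
    (A : Matrix (Fin n) (Fin n) ℝ)
    (hA : IsSingularMMatrix A) (hirr : IsIrreducibleMatrix A)
    (S : Set (Fin n × Fin n))
    (hS1 : S ⊆ {p : Fin n × Fin n | p.1 ≤ p.2})
    (hS2 : ∀ i : Fin n, (i, i) ∈ S)
    (hS3 : ((⟨n - 2, by omega⟩ : Fin n), (⟨n - 1, by omega⟩ : Fin n)) ∉ S)
    (U : Matrix (Fin n) (Fin n) ℝ) (hU : IsFSAIUpperFactor A U S) :
    IsSingularMMatrix (A * U) := by
  classical
  obtain ⟨hAZ, B, hBnn, hAeq⟩ := hA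
  obtain ⟨hUtri, hUoff, hUeq⟩ := hU
  haveI : Nonempty (Fin n) := ⟨⟨0, by omega⟩⟩
  set r : ℝ := sRad B with hrdef
  have hAeq' : A = r • 1 - B := hAeq
  have hr0 : 0 ≤ r := sRad_nonneg B
  -- off diagonal relation
  have hoff : ∀ a b : Fin n, a ≠ b → B a b = - A a b := by
    intro a b hab
    rw [hAeq']
    simp [Matrix.sub_apply, Matrix.smul_apply, Matrix.one_apply, hab]
  -- connectivity
  have hconnB : Conn B := by
    intro i j
    refine rtg_mono_offdiag (fun a b hab hne => ?_) (hirr i j)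
    rw [hoff a b hne]
    simpa using hab
  have hconnBT : Conn Bᵀ := by
    intro i j
    refine rtg_reverse (fun a b hab hne => ?_) (hirr j i)
    show Bᵀ b a ≠ 0
    rw [Matrix.transpose_apply, hoff a b hne]
    simpa using hab
  -- determinant of A vanishes
  have hdetA : A.det = 0 := by
    rw [hAeq']
    exact pf_det_zero B hBnn
  -- left Perron vector
  have hBTnn : ∀ i j, 0 ≤ Bᵀ i j := fun i j => hBnn j i
  have hrT : sRad Bᵀ = r := sRad_transpose B
  have hdetT : (r • (1 : Matrix (Fin n) (Fin n) ℝ) - Bᵀ).det = 0 := by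
    rw [← hrT]
    exact pf_det_zero Bᵀ hBTnn
  obtain ⟨v, hv0, hveq⟩ := (Matrix.exists_mulVec_eq_zero_iff).2 hdetT
  have hveq' : Bᵀ *ᵥ v = r • v := by
    rw [Matrix.sub_mulVec, Matrix.smul_mulVec, Matrix.one_mulVec, sub_eq_zero] at hveq
    exact hveq.symm
  set w : Fin n → ℝ := fun i => |v i| with hwdef
  have hwnn : ∀ i, 0 ≤ w i := fun i => abs_nonneg _
  have hw0 : w ≠ 0 := fun h => hv0 (funext fun i => abs_eq_zero.1 (congrFun h i))
  have hsubw : ∀ i, sRad Bᵀ * w i ≤ (Bᵀ *ᵥ w) i := by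
    intro i
    rw [hrT]
    have h1 : r * w i = |r * v i| := by
      rw [abs_mul, abs_of_nonneg hr0]
    have h2 : r * v i = (Bᵀ *ᵥ v) i := by rw [hveq']; simp
    rw [h1, h2, Matrix.mulVec, dotProduct]
    calc |∑ k, Bᵀ i k * v k| ≤ ∑ k, |Bᵀ i k * v k| := Finset.abs_sum_le_sum_abs _ _
      _ = (Bᵀ *ᵥ w) i := by
          rw [Matrix.mulVec, dotProduct]
          exact Finset.sum_congr rfl fun k _ => by
            rw [abs_mul, abs_of_nonneg (hBTnn i k)]
  have hforce : Bᵀ *ᵥ w = sRad Bᵀ • w := forcing_eq Bᵀ hBTnn hconnBT w hwnn hw0 hsubw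
  obtain ⟨C, hCpos, hCcomm⟩ := exists_pos_power Bᵀ hBTnn hconnBT
  set y : Fin n → ℝ := C *ᵥ w with hydef
  have hypos : ∀ i, 0 < y i := mulVec_pos C hCpos w hwnn hw0
  have hyeig : Bᵀ *ᵥ y = r • y := by
    rw [hydef, Matrix.mulVec_mulVec, ← hCcomm, ← Matrix.mulVec_mulVec, hforce, hrT,
      Matrix.mulVec_smul]
  have hyA : y ᵥ* A = 0 := by
    rw [← Matrix.mulVec_transpose, hAeq', Matrix.transpose_sub, Matrix.transpose_smul,
      Matrix.transpose_one, Matrix.sub_mulVec, Matrix.smul_mulVec, Matrix.one_mulVec,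
      hyeig, sub_self]
  -- nonnegativity of U
  have hUnn : ∀ k j : Fin n, 0 ≤ U k j := by
    intro k j
    by_cases hkJ : (k, j) ∈ S
    · -- submatrix analysis for column j
      set p : Fin n → Prop := fun x => (x, j) ∈ S with hp
      haveI : DecidablePred p := Classical.decPred p
      haveI : Nonempty (Subtype p) := ⟨⟨j, hS2 j⟩⟩
      set BJ : Matrix (Subtype p) (Subtype p) ℝ :=
        Matrix.of (fun a b : Subtype p => B a.1 b.1) with hBJ
      have hBJnn : ∀ a b, 0 ≤ BJ a b := fun a b => hBnn a.1 b.1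
      set ρJ : ℝ := sRad BJ with hρJ
      have hρJ0 : 0 ≤ ρJ := sRad_nonneg BJ
      have hdetJ : (ρJ • (1 : Matrix (Subtype p) (Subtype p) ℝ) - BJ).det = 0 :=
        pf_det_zero BJ hBJnn
      obtain ⟨vJ, hvJ0, hvJeq⟩ := (Matrix.exists_mulVec_eq_zero_iff).2 hdetJ
      have hvJeq' : BJ *ᵥ vJ = ρJ • vJ := by
        rw [Matrix.sub_mulVec, Matrix.smul_mulVec, Matrix.one_mulVec,
          sub_eq_zero] at hvJeq
        exact hvJeq.symm
      set wJ : Subtype p → ℝ := fun a => |vJ a| with hwJ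
      have hwJnn : ∀ a, 0 ≤ wJ a := fun a => abs_nonneg _
      have hwJ0 : wJ ≠ 0 := fun h => hvJ0 (funext fun a => abs_eq_zero.1 (congrFun h a))
      have hsubJ : ∀ a, ρJ * wJ a ≤ (BJ *ᵥ wJ) a := by
        intro a
        have h1 : ρJ * wJ a = |ρJ * vJ a| := by rw [abs_mul, abs_of_nonneg hρJ0]
        have h2 : ρJ * vJ a = (BJ *ᵥ vJ) a := by rw [hvJeq']; simp
        rw [h1, h2, Matrix.mulVec, dotProduct]
        calc |∑ b, BJ a b * vJ b| ≤ ∑ b, |BJ a b * vJ b| := Finset.abs_sum_le_sum_abs _ _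
          _ = (BJ *ᵥ wJ) a := by
              rw [Matrix.mulVec, dotProduct]
              exact Finset.sum_congr rfl fun b _ => by
                rw [abs_mul, abs_of_nonneg (hBJnn a b)]
      -- extend wJ by zero
      set w' : Fin n → ℝ := fun i => if h : p i then wJ ⟨i, h⟩ else 0 with hw'
      have hw'nn : ∀ i, 0 ≤ w' i := by
        intro i
        simp only [hw']
        split
        · exact hwJnn _
        · exact le_refl 0
      have hw'0 : w' ≠ 0 := by
        intro h
        apply hwJ0
        funext a
        have := congrFun h a.1
        simpa [hw', a.2] using this
      have hBw' : ∀ (i : Fin n) (hi : p i), (B *ᵥ w') i = (BJ *ᵥ wJ) ⟨i, hi⟩ := by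
        intro i hi
        rw [Matrix.mulVec, dotProduct]
        have hvanish : ∀ x : Fin n, ¬ p x → B i x * w' x = 0 := by
          intro x hx
          simp only [hw', dif_neg hx, mul_zero]
        rw [sum_eq_sum_subtype' p (fun x => B i x * w' x) hvanish]
        rw [Matrix.mulVec, dotProduct]
        exact Finset.sum_congr rfl fun b _ => by
          simp only [hw', dif_pos b.2]
          rfl
      have hsub' : ∀ i, ρJ * w' i ≤ (B *ᵥ w') i := by
        intro i
        by_cases hi : p i
        · rw [hBw' i hi]
          have h1 : w' i = wJ ⟨i, hi⟩ := by simp only [hw', dif_pos hi]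
          rw [h1]
          exact hsubJ ⟨i, hi⟩
        · have h1 : w' i = 0 := by simp only [hw', dif_neg hi]
          rw [h1, mul_zero, Matrix.mulVec, dotProduct]
          exact Finset.sum_nonneg fun x _ => mul_nonneg (hBnn i x) (hw'nn x)
      have hρJr : ρJ ≤ r := subinvariant_le B hBnn ρJ w' hw'nn hw'0 hsub'
      -- there is an index outside the pattern of column j
      obtain ⟨i₀, hi₀⟩ : ∃ i₀ : Fin n, ¬ p i₀ := by
        by_cases hj : (j : ℕ) = n - 1
        · refine ⟨⟨n - 2, by omega⟩, fun hmem => hS3 ?_⟩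
          have : j = (⟨n - 1, by omega⟩ : Fin n) := Fin.ext (by simpa using hj)
          rw [← this]
          exact hmem
        · refine ⟨⟨n - 1, by omega⟩, fun hmem => hj ?_⟩
          have h1 := hS1 hmem
          simp only [Set.mem_setOf_eq] at h1
          have h2 : n - 1 ≤ (j : ℕ) := h1
          have h3 : (j : ℕ) < n := j.isLt
          omega
      have hρJlt : ρJ < r := by
        rcases lt_or_eq_of_le hρJr with h | h
        · exact h
        · exfalso
          have hsubr : ∀ i, sRad B * w' i ≤ (B *ᵥ w') i := by
            intro i
            rw [← hrdef, ← h]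
            exact hsub' i
          have heig := forcing_eq B hBnn hconnB w' hw'nn hw'0 hsubr
          have hzero := zero_propagation B hBnn hconnB w' hw'nn (sRad B) heig i₀
            (by simp only [hw', dif_neg hi₀])
          exact hw'0 (funext fun i => hzero i)
      -- invert the submatrix
      have hdetallJ : ∀ s, r ≤ s →
          (s • (1 : Matrix (Subtype p) (Subtype p) ℝ) - BJ).det ≠ 0 :=
        fun s hs => det_ne_zero_of_sRad_lt BJ (lt_of_lt_of_le hρJlt hs)
      have hRJnn := resolvent_nonneg BJ hBJnn r hdetallJ
      have hdetAJ : IsUnit ((r • (1 : Matrix (Subtype p) (Subtype p) ℝ) - BJ)).det :=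
        isUnit_iff_ne_zero.2 (hdetallJ r le_rfl)
      set AJ : Matrix (Subtype p) (Subtype p) ℝ :=
        r • (1 : Matrix (Subtype p) (Subtype p) ℝ) - BJ with hAJ
      have hAJapp : ∀ a b : Subtype p, AJ a b = A a.1 b.1 := by
        intro a b
        rw [hAJ, hAeq']
        by_cases hab : a = b
        · have hab' : a.1 = b.1 := by rw [hab]
          simp only [Matrix.sub_apply, Matrix.smul_apply, Matrix.one_apply, hBJ,
            Matrix.of_apply, if_pos hab, if_pos hab', smul_eq_mul]
        · have hab' : a.1 ≠ b.1 := fun h => hab (Subtype.ext h)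
          simp only [Matrix.sub_apply, Matrix.smul_apply, Matrix.one_apply, hBJ,
            Matrix.of_apply, if_neg hab, if_neg hab', smul_eq_mul]
      set u : Subtype p → ℝ := fun a => U a.1 j with hu
      have hAJu : ∀ a : Subtype p, (AJ *ᵥ u) a = (if a.1 = j then 1 else 0) := by
        intro a
        rw [Matrix.mulVec, dotProduct]
        have h1 : ∀ b : Subtype p, AJ a b * u b = A a.1 b.1 * U b.1 j := by
          intro b
          rw [hAJapp]
        rw [Finset.sum_congr rfl fun b _ => h1 b]
        have hvanish : ∀ x : Fin n, ¬ p x → A a.1 x * U x j = 0 := by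
          intro x hx
          rw [hUoff (x, j) hx, mul_zero]
        rw [← sum_eq_sum_subtype' p (fun x => A a.1 x * U x j) hvanish]
        have h2 : ∑ x, A a.1 x * U x j = (A * U) a.1 j := by
          rw [Matrix.mul_apply]
        rw [h2]
        exact hUeq (a.1, j) a.2
      have hunn : ∀ a : Subtype p, 0 ≤ u a := by
        have hfix : AJ⁻¹ *ᵥ (AJ *ᵥ u) = u := by
          rw [Matrix.mulVec_mulVec, Matrix.nonsing_inv_mul _ hdetAJ, Matrix.one_mulVec]
        intro a
        rw [← hfix, Matrix.mulVec, dotProduct]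
        apply Finset.sum_nonneg
        intro b _
        apply mul_nonneg (hRJnn a b)
        rw [hAJu b]
        split <;> norm_num
      exact hunn ⟨k, hkJ⟩
    · rw [hUoff (k, j) hkJ]
  -- A * U is a Z-matrix
  have hMZ : IsZMatrix (A * U) := by
    intro i j hij
    by_cases hijS : (i, j) ∈ S
    · rw [hUeq (i, j) hijS]
      simp [hij]
    · rw [Matrix.mul_apply]
      apply Finset.sum_nonpos
      intro k _
      by_cases hkS : (k, j) ∈ S
      · have hki : i ≠ k := fun h => hijS (h ▸ hkS)
        exact mul_nonpos_of_nonpos_of_nonneg (hAZ i k hki) (hUnn k j)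
      · rw [hUoff (k, j) hkS, mul_zero]
  have hMdiag : ∀ i, (A * U) i i = 1 := by
    intro i
    rw [hUeq (i, i) (hS2 i)]
    simp
  set M : Matrix (Fin n) (Fin n) ℝ := A * U with hM
  set B' : Matrix (Fin n) (Fin n) ℝ := 1 - M with hB'
  have hB'nn : ∀ i j, 0 ≤ B' i j := by
    intro i j
    rw [hB', Matrix.sub_apply]
    by_cases hij : i = j
    · subst hij
      rw [hMdiag i, Matrix.one_apply_eq]
      norm_num
    · rw [Matrix.one_apply_ne hij]
      have := hMZ i j hij
      linarith
  have hdetM : M.det = 0 := by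
    rw [hM, Matrix.det_mul, hdetA, zero_mul]
  -- spectral bound for B'
  have hspec : ∀ z ∈ spectrum ℂ (B'.map Complex.ofReal), ‖z‖ ≤ 1 := by
    intro z hz
    obtain ⟨vv, hvv0, hvveq⟩ := spec_to_eigenvector _ hz
    set ww : Fin n → ℝ := fun i => ‖vv i‖ with hww
    have hwwnn : ∀ i, 0 ≤ ww i := fun i => norm_nonneg _
    have hsubB' : ∀ i, ‖z‖ * ww i ≤ (B' *ᵥ ww) i :=
      abs_eigen_subinv B' hB'nn hvveq
    -- left vector kills M
    have hyM : y ᵥ* M = 0 := by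
      rw [hM, ← Matrix.vecMul_vecMul, hyA, Matrix.zero_vecMul]
    have hyB' : y ᵥ* B' = y := by
      rw [hB', Matrix.vecMul_sub, hyM, Matrix.vecMul_one, sub_zero]
    have hdot1 : ‖z‖ * (∑ i, y i * ww i) ≤ ∑ i, y i * ww i := by
      have e1 : ‖z‖ * (∑ i, y i * ww i) = ∑ i, y i * (‖z‖ * ww i) := by
        rw [Finset.mul_sum]
        exact Finset.sum_congr rfl fun i _ => by ring
      have e2 : ∑ i, y i * (B' *ᵥ ww) i = ∑ i, y i * ww i := by
        have h3 : y ⬝ᵥ (B' *ᵥ ww) = (y ᵥ* B') ⬝ᵥ ww := Matrix.dotProduct_mulVec y B' ww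
        rw [hyB'] at h3
        simpa [dotProduct] using h3
      rw [e1, ← e2]
      exact Finset.sum_le_sum fun i _ =>
        mul_le_mul_of_nonneg_left (hsubB' i) (hypos i).le
    have hdotpos : 0 < ∑ i, y i * ww i := by
      obtain ⟨k₀, hk₀⟩ := Function.ne_iff.1 hvv0
      have hwwk : 0 < ww k₀ := norm_pos_iff.2 hk₀
      have h1 : 0 < y k₀ * ww k₀ := mul_pos (hypos k₀) hwwk
      have h2 : y k₀ * ww k₀ ≤ ∑ i, y i * ww i :=
        Finset.single_le_sum (fun i _ => mul_nonneg (hypos i).le (hwwnn i))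
          (Finset.mem_univ k₀)
      linarith
    have : ‖z‖ * (∑ i, y i * ww i) ≤ 1 * (∑ i, y i * ww i) := by
      rw [one_mul]; exact hdot1
    exact le_of_mul_le_mul_right this hdotpos
  have h1spec : (1 : ℂ) ∈ spectrum ℂ (B'.map Complex.ofReal) := by
    rw [mem_spec_iff]
    have h1 : (1 : ℂ) • (1 : Matrix (Fin n) (Fin n) ℂ) - B'.map Complex.ofReal
        = M.map Complex.ofReal := by
      ext i j
      simp [hB', Matrix.one_apply, Matrix.sub_apply, apply_ite]
    rw [h1]
    have hd := RingHom.map_det Complex.ofRealHom M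
    rw [RingHom.mapMatrix_apply] at hd
    have he : M.map Complex.ofReal = M.map Complex.ofRealHom := rfl
    rw [he, ← hd, hdetM]
    simp
  have hsRadB' : sRad B' = 1 := by
    apply IsGreatest.csSup_eq
    constructor
    · exact ⟨1, h1spec, by simp⟩
    · rintro x ⟨z, hz, rfl⟩
      exact hspec z hz
  refine ⟨hMZ, B', hB'nn, ?_⟩
  have hsr : specRad B' = sRad B' := rfl
  rw [hsr, hsRadB', one_smul, hB']
  abel
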